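/- Let c₁, c₂ be points of the Euclidean plane ℝ², let d = ‖c₁ − c₂‖, and let r₁, r₂ > 0 satisfy |r₁ − r₂| < d < r₁ + r₂. Then the two-dimensional Lebesgue measure of the intersection of the closed disks of radius r₁ about c₁ and radius r₂ about c₂ equals r₂²·arccos((d² + r₂² − r₁²)/(2dr₂)) + r₁²·arccos((d² + r₁² − r₂²)/(2dr₁)) − (1/2)·√((−d+r₁+r₂)(d+r₂−r₁)(d−r₂+r₁)(d+r₂+r₁)). -/

import Mathlib

open Real MeasureTheory intervalIntegral

set_option maxHeartbeats 1000000

lemma seg_integral {r t : ℝ} (hr : 0 < r) (ht : -r < t) (ht' : t < r) :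
    ∫ x in t..r, 2 * Real.sqrt (r ^ 2 - x ^ 2)
      = r ^ 2 * Real.arccos (t / r) - t * Real.sqrt (r ^ 2 - t ^ 2) := by
  set F : ℝ → ℝ := fun x => x * Real.sqrt (r ^ 2 - x ^ 2) + r ^ 2 * Real.arcsin (x / r) with hF
  have hcont : ContinuousOn (fun x : ℝ => 2 * Real.sqrt (r ^ 2 - x ^ 2)) (Set.Icc t r) :=
    (continuous_const.mul (Real.continuous_sqrt.comp (by continuity))).continuousOn
  have hcontF : ContinuousOn F (Set.Icc t r) := by
    apply Continuous.continuousOn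
    apply Continuous.add
    · exact continuous_id.mul (Real.continuous_sqrt.comp (by continuity))
    · exact continuous_const.mul (Real.continuous_arcsin.comp (continuous_id.div_const r))
  have hderiv : ∀ x ∈ Set.Ioo t r, HasDerivWithinAt F (2 * Real.sqrt (r ^ 2 - x ^ 2)) (Set.Ioi x) x := by
    intro x hx
    have hx1 : -r < x := lt_trans ht hx.1
    have hx2 : x < r := hx.2
    have hpos : 0 < r ^ 2 - x ^ 2 := by nlinarith
    have hs : Real.sqrt (r ^ 2 - x ^ 2) > 0 := Real.sqrt_pos.2 hpos
    have h1 : HasDerivAt (fun x : ℝ => r ^ 2 - x ^ 2) (-(2 * x)) x := by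
      simpa using ((hasDerivAt_pow 2 x).const_sub (r ^ 2))
    have hsq : HasDerivAt (fun x : ℝ => Real.sqrt (r ^ 2 - x ^ 2))
        (-(2 * x) / (2 * Real.sqrt (r ^ 2 - x ^ 2))) x :=
      h1.sqrt (ne_of_gt hpos)
    have harc : HasDerivAt (fun x : ℝ => Real.arcsin (x / r))
        ((1 / Real.sqrt (1 - (x / r) ^ 2)) * (1 / r)) x := by
      have h2 : HasDerivAt (fun x : ℝ => x / r) (1 / r) x := (hasDerivAt_id x).div_const r
      exact (Real.hasDerivAt_arcsin (by
        intro h; rw [div_eq_iff (ne_of_gt hr)] at h; nlinarith) (by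
        intro h; rw [div_eq_iff (ne_of_gt hr)] at h; nlinarith)).comp x h2
    have hFd : HasDerivAt F
        (1 * Real.sqrt (r ^ 2 - x ^ 2) + x * (-(2 * x) / (2 * Real.sqrt (r ^ 2 - x ^ 2)))
          + r ^ 2 * ((1 / Real.sqrt (1 - (x / r) ^ 2)) * (1 / r))) x :=
      ((hasDerivAt_id x).mul hsq).add (harc.const_mul (r ^ 2))
    have heq : 1 * Real.sqrt (r ^ 2 - x ^ 2) + x * (-(2 * x) / (2 * Real.sqrt (r ^ 2 - x ^ 2)))
          + r ^ 2 * ((1 / Real.sqrt (1 - (x / r) ^ 2)) * (1 / r))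
        = 2 * Real.sqrt (r ^ 2 - x ^ 2) := by
      have h4 : 1 - (x / r) ^ 2 = (r ^ 2 - x ^ 2) / r ^ 2 := by
        field_simp
      have h3 : Real.sqrt (1 - (x / r) ^ 2) = Real.sqrt (r ^ 2 - x ^ 2) / r := by
        rw [h4, Real.sqrt_div hpos.le, Real.sqrt_sq hr.le]
      rw [h3]
      have hsqs : Real.sqrt (r ^ 2 - x ^ 2) ^ 2 = r ^ 2 - x ^ 2 := Real.sq_sqrt hpos.le
      field_simp
      nlinarith [hsqs, mul_pos hs hr, mul_pos (mul_pos hs hs) hr, sq_nonneg x]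
    rw [heq] at hFd
    exact hFd.hasDerivWithinAt
  have hint : IntervalIntegrable (fun x : ℝ => 2 * Real.sqrt (r ^ 2 - x ^ 2)) volume t r :=
    hcont.intervalIntegrable_of_Icc ht'.le
  have key := intervalIntegral.integral_eq_sub_of_hasDeriv_right_of_le ht'.le hcontF hderiv hint
  rw [key, hF]
  simp only []
  rw [div_self (ne_of_gt hr), Real.arcsin_one]
  have h0 : Real.sqrt (r ^ 2 - r ^ 2) = 0 := by simp
  rw [h0, Real.arccos_eq_pi_div_two_sub_arcsin]
  ring

lemma area_T {d r₁ r₂ : ℝ} (hr₁ : 0 < r₁) (hr₂ : 0 < r₂)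
    (hlow : |r₁ - r₂| < d) (hhigh : d < r₁ + r₂) :
    (volume {p : ℝ × ℝ | p.1 ^ 2 + p.2 ^ 2 ≤ r₁ ^ 2 ∧ (p.1 - d) ^ 2 + p.2 ^ 2 ≤ r₂ ^ 2}).toReal
      = r₂ ^ 2 * Real.arccos ((d ^ 2 + r₂ ^ 2 - r₁ ^ 2) / (2 * d * r₂))
      + r₁ ^ 2 * Real.arccos ((d ^ 2 + r₁ ^ 2 - r₂ ^ 2) / (2 * d * r₁))
      - 1 / 2 * Real.sqrt ((-d + r₁ + r₂) * (d + r₂ - r₁) * (d - r₂ + r₁) * (d + r₂ + r₁)) := by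
  have hd : 0 < d := lt_of_le_of_lt (abs_nonneg _) hlow
  have hl1 : r₁ - r₂ < d := lt_of_le_of_lt (le_abs_self _) hlow
  have hl2 : r₂ - r₁ < d := by have := abs_lt.1 hlow; linarith [this.1]
  set a : ℝ := (d ^ 2 + r₁ ^ 2 - r₂ ^ 2) / (2 * d) with ha_def
  clear_value a
  have ha2 : a < r₁ := by
    rw [ha_def, div_lt_iff₀ (by positivity)]
    nlinarith
  have ha1 : -r₁ < a := by
    rw [ha_def, lt_div_iff₀ (by positivity)]
    nlinarith
  have hda : d - r₂ < a := by
    rw [ha_def, lt_div_iff₀ (by positivity)]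
    nlinarith
  have hadr : a < d + r₂ := by
    rw [ha_def, div_lt_iff₀ (by positivity)]
    nlinarith
  have hb2 : d - a < r₂ := by linarith
  have hb1 : -r₂ < d - a := by linarith
  set g : ℝ → ℝ := fun x => 2 * Real.sqrt (min (r₁ ^ 2 - x ^ 2) (r₂ ^ 2 - (x - d) ^ 2)) with hg_def
  clear_value g
  have hgcont : Continuous g := by
    rw [hg_def]
    apply continuous_const.mul
    apply Real.continuous_sqrt.comp
    exact Continuous.min (by continuity) (by continuity)
  have hgnn : ∀ x, 0 ≤ g x := fun x => by rw [hg_def]; positivity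
  set S : Set (ℝ × ℝ) :=
    {p : ℝ × ℝ | p.1 ^ 2 + p.2 ^ 2 ≤ r₁ ^ 2 ∧ (p.1 - d) ^ 2 + p.2 ^ 2 ≤ r₂ ^ 2} with hS_def
  clear_value S
  have hSmeas : MeasurableSet S := by
    rw [hS_def]
    apply MeasurableSet.inter
    · exact measurableSet_le ((continuous_fst.pow 2).add (continuous_snd.pow 2)).measurable
        measurable_const
    · exact measurableSet_le (((continuous_fst.sub continuous_const).pow 2).add
        (continuous_snd.pow 2)).measurable measurable_const
  -- Step A : volume as lintegral of slice lengths
  have stepA : volume S = ∫⁻ x : ℝ, ENNReal.ofReal (g x) := by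
    rw [MeasureTheory.Measure.volume_eq_prod, MeasureTheory.Measure.prod_apply hSmeas]
    congr 1
    ext x
    have hslice : Prod.mk x ⁻¹' S = {y : ℝ | y ^ 2 ≤ min (r₁ ^ 2 - x ^ 2) (r₂ ^ 2 - (x - d) ^ 2)} := by
      ext y
      simp only [hS_def, Set.mem_preimage, Set.mem_setOf_eq, le_min_iff]
      constructor
      · rintro ⟨h1, h2⟩; constructor <;> linarith
      · rintro ⟨h1, h2⟩; constructor <;> linarith
    rw [hslice]
    set m := min (r₁ ^ 2 - x ^ 2) (r₂ ^ 2 - (x - d) ^ 2) with hm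
    clear_value m
    rcases le_or_gt 0 m with hm0 | hm0
    · have : {y : ℝ | y ^ 2 ≤ m} = Set.Icc (-Real.sqrt m) (Real.sqrt m) := by
        ext y
        simp only [Set.mem_setOf_eq, Set.mem_Icc, ← abs_le, ← Real.sqrt_sq_eq_abs]
        rw [Real.sqrt_le_sqrt_iff hm0]
      rw [this, Real.volume_Icc]
      simp only [hg_def]
      rw [ENNReal.ofReal_eq_ofReal_iff (by have := Real.sqrt_nonneg m; linarith)
        (by have := Real.sqrt_nonneg ((r₁ ^ 2 - x ^ 2) ⊓ (r₂ ^ 2 - (x - d) ^ 2)); linarith)]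
      rw [← hm]
      ring
    · have h1 : {y : ℝ | y ^ 2 ≤ m} = ∅ := by
        ext y
        simp only [Set.mem_setOf_eq, Set.mem_empty_iff_false, iff_false, not_le]
        exact lt_of_lt_of_le hm0 (sq_nonneg y)
      have h2 : Real.sqrt m = 0 := Real.sqrt_eq_zero'.2 hm0.le
      rw [h1, hg_def]
      simp only [← hm]
      simp [h2]
  -- Step B : to a real integral
  have stepB : (volume S).toReal = ∫ x : ℝ, g x := by
    rw [stepA, MeasureTheory.integral_eq_lintegral_of_nonneg_ae
      (Filter.Eventually.of_forall hgnn) hgcont.aestronglyMeasurable]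
  -- Step C : restrict to the support interval
  have stepC : ∫ x : ℝ, g x = ∫ x in Set.Icc (d - r₂) r₁, g x := by
    symm
    apply MeasureTheory.setIntegral_eq_integral_of_forall_compl_eq_zero
    intro x hx
    simp only [Set.mem_Icc, not_and_or, not_le] at hx
    have : min (r₁ ^ 2 - x ^ 2) (r₂ ^ 2 - (x - d) ^ 2) ≤ 0 := by
      rcases hx with hx | hx
      · exact le_trans (min_le_right _ _) (by nlinarith)
      · exact le_trans (min_le_left _ _) (by nlinarith)
    rw [hg_def]
    simp [Real.sqrt_eq_zero'.2 this]
  -- Step D : to interval integrals and split at a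
  have hle1 : d - r₂ ≤ a := hda.le
  have hle2 : a ≤ r₁ := ha2.le
  have stepD : ∫ x in Set.Icc (d - r₂) r₁, g x
      = (∫ x in (d - r₂)..a, g x) + ∫ x in a..r₁, g x := by
    rw [MeasureTheory.integral_Icc_eq_integral_Ioc,
      ← intervalIntegral.integral_of_le (le_trans hle1 hle2)]
    exact (intervalIntegral.integral_add_adjacent_intervals
      (hgcont.intervalIntegrable _ _) (hgcont.intervalIntegrable _ _)).symm
  -- Step E : evaluate the two pieces
  have piece1 : ∫ x in (d - r₂)..a, g x
      = r₂ ^ 2 * Real.arccos ((d - a) / r₂) - (d - a) * Real.sqrt (r₂ ^ 2 - (d - a) ^ 2) := by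
    have hcongr : ∫ x in (d - r₂)..a, g x
        = ∫ x in (d - r₂)..a, (fun u : ℝ => 2 * Real.sqrt (r₂ ^ 2 - u ^ 2)) (d - x) := by
      apply intervalIntegral.integral_congr
      intro x hx
      rw [Set.uIcc_of_le (by linarith)] at hx
      have hxa : x ≤ a := hx.2
      have hmin : min (r₁ ^ 2 - x ^ 2) (r₂ ^ 2 - (x - d) ^ 2) = r₂ ^ 2 - (x - d) ^ 2 := by
        apply min_eq_right
        rw [ha_def, le_div_iff₀ (by positivity)] at hxa
        nlinarith
      simp only [hg_def, hmin]
      congr 1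
      rw [show d - x = -(x - d) by ring, neg_sq]
    rw [hcongr, intervalIntegral.integral_comp_sub_left (fun u : ℝ => 2 * Real.sqrt (r₂ ^ 2 - u ^ 2)) d]
    have : d - (d - r₂) = r₂ := by ring
    rw [this]
    exact seg_integral hr₂ hb1 hb2
  have piece2 : ∫ x in a..r₁, g x
      = r₁ ^ 2 * Real.arccos (a / r₁) - a * Real.sqrt (r₁ ^ 2 - a ^ 2) := by
    have hcongr : ∫ x in a..r₁, g x = ∫ x in a..r₁, 2 * Real.sqrt (r₁ ^ 2 - x ^ 2) := by
      apply intervalIntegral.integral_congr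
      intro x hx
      rw [Set.uIcc_of_le hle2] at hx
      have hxa : a ≤ x := hx.1
      have hmin : min (r₁ ^ 2 - x ^ 2) (r₂ ^ 2 - (x - d) ^ 2) = r₁ ^ 2 - x ^ 2 := by
        apply min_eq_left
        rw [ha_def, div_le_iff₀ (by positivity)] at hxa
        nlinarith
      simp only [hg_def, hmin]
    rw [hcongr]
    exact seg_integral hr₁ ha1 ha2
  -- Step F : algebraic identities
  have harg1 : (d - a) / r₂ = (d ^ 2 + r₂ ^ 2 - r₁ ^ 2) / (2 * d * r₂) := by
    rw [ha_def]; field_simp; try ring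
  have harg2 : a / r₁ = (d ^ 2 + r₁ ^ 2 - r₂ ^ 2) / (2 * d * r₁) := by
    rw [ha_def]; field_simp; try ring
  have hsame : r₂ ^ 2 - (d - a) ^ 2 = r₁ ^ 2 - a ^ 2 := by
    rw [ha_def]; field_simp; try ring
  have hprod : (-d + r₁ + r₂) * (d + r₂ - r₁) * (d - r₂ + r₁) * (d + r₂ + r₁)
      = (2 * d) ^ 2 * (r₁ ^ 2 - a ^ 2) := by
    rw [ha_def]; field_simp; try ring
  have hsqrtprod : Real.sqrt ((-d + r₁ + r₂) * (d + r₂ - r₁) * (d - r₂ + r₁) * (d + r₂ + r₁))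
      = 2 * d * Real.sqrt (r₁ ^ 2 - a ^ 2) := by
    rw [hprod, Real.sqrt_mul (sq_nonneg _), Real.sqrt_sq (by positivity)]
  rw [stepB, stepC, stepD, piece1, piece2, harg1, harg2, hsame, hsqrtprod]
  ring

/-- Area of the intersection of two disks in the Euclidean plane (lens area
formula), when the two circles properly intersect. -/
theorem disk_intersection_area (c₁ c₂ : EuclideanSpace ℝ (Fin 2)) (r₁ r₂ : ℝ)
    (hr₁ : 0 < r₁) (hr₂ : 0 < r₂)
    (hlow : |r₁ - r₂| < ‖c₁ - c₂‖) (hhigh : ‖c₁ - c₂‖ < r₁ + r₂) :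
    (volume (Metric.closedBall c₁ r₁ ∩ Metric.closedBall c₂ r₂)).toReal =
      r₂ ^ 2 * Real.arccos ((‖c₁ - c₂‖ ^ 2 + r₂ ^ 2 - r₁ ^ 2) / (2 * ‖c₁ - c₂‖ * r₂)) +
      r₁ ^ 2 * Real.arccos ((‖c₁ - c₂‖ ^ 2 + r₁ ^ 2 - r₂ ^ 2) / (2 * ‖c₁ - c₂‖ * r₁)) -
      1 / 2 * Real.sqrt ((-‖c₁ - c₂‖ + r₁ + r₂) * (‖c₁ - c₂‖ + r₂ - r₁) *
        (‖c₁ - c₂‖ - r₂ + r₁) * (‖c₁ - c₂‖ + r₂ + r₁)) := by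
  set d : ℝ := ‖c₁ - c₂‖ with hd_def
  have hd : 0 < d := lt_of_le_of_lt (abs_nonneg _) hlow
  have hdne : d ≠ 0 := ne_of_gt hd
  set v : EuclideanSpace ℝ (Fin 2) := c₂ - c₁ with hv_def
  have hv_norm : ‖v‖ = d := by rw [hv_def, hd_def, norm_sub_rev]
  -- Step 1 : translate c₁ to the origin
  have step1 : volume (Metric.closedBall c₁ r₁ ∩ Metric.closedBall c₂ r₂)
      = volume (Metric.closedBall (0 : EuclideanSpace ℝ (Fin 2)) r₁ ∩ Metric.closedBall v r₂) := by
    have hmeas : MeasurableSet (Metric.closedBall c₁ r₁ ∩ Metric.closedBall c₂ r₂) :=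
      measurableSet_closedBall.inter measurableSet_closedBall
    have hmp : MeasurePreserving (fun x : EuclideanSpace ℝ (Fin 2) => x + c₁) volume volume :=
      measurePreserving_add_right volume c₁
    rw [← hmp.measure_preimage hmeas.nullMeasurableSet]
    congr 1
    ext x
    have e1 : x + c₁ - c₁ = x := by abel
    have e2 : x + c₁ - c₂ = x - v := by rw [hv_def]; abel
    simp only [Set.mem_preimage, Set.mem_inter_iff, Metric.mem_closedBall, dist_eq_norm,
      e1, e2, sub_zero]
  -- Step 2 : rotate v to the first coordinate axis
  obtain ⟨b, hb⟩ : ∃ b : OrthonormalBasis (Fin 2) ℝ (EuclideanSpace ℝ (Fin 2)), b 0 = d⁻¹ • v := by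
    have hcard : Module.finrank ℝ (EuclideanSpace ℝ (Fin 2)) = Fintype.card (Fin 2) := by
      simp [finrank_euclideanSpace]
    have hunorm : ‖d⁻¹ • v‖ = 1 := by
      rw [norm_smul, hv_norm, norm_inv, Real.norm_eq_abs, abs_of_pos hd, inv_mul_cancel₀ hdne]
    have horth : Orthonormal ℝ (Set.restrict {0} (fun _ : Fin 2 => d⁻¹ • v)) := by
      constructor
      · intro i; exact hunorm
      · intro i j hij
        exact absurd (Subtype.ext (by
          have h1 := i.2; have h2 := j.2
          simp only [Set.mem_singleton_iff] at h1 h2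
          rw [h1, h2])) hij
    obtain ⟨b, hb⟩ := horth.exists_orthonormalBasis_extension_of_card_eq hcard
    exact ⟨b, hb 0 rfl⟩
  have step2 : volume (Metric.closedBall (0 : EuclideanSpace ℝ (Fin 2)) r₁ ∩ Metric.closedBall v r₂)
      = volume (Metric.closedBall (0 : EuclideanSpace ℝ (Fin 2)) r₁ ∩ Metric.closedBall (EuclideanSpace.single 0 d) r₂) := by
    have hmp : MeasurePreserving b.repr volume volume := b.measurePreserving_repr
    have hmeas : MeasurableSet
        (Metric.closedBall (0 : EuclideanSpace ℝ (Fin 2)) r₁ ∩ Metric.closedBall (EuclideanSpace.single (0 : Fin 2) d) r₂) :=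
      measurableSet_closedBall.inter measurableSet_closedBall
    rw [← hmp.measure_preimage hmeas.nullMeasurableSet]
    congr 1
    ext x
    have hsd : b.repr.symm (EuclideanSpace.single (0 : Fin 2) d) = v := by
      have hss : EuclideanSpace.single (0 : Fin 2) d = d • EuclideanSpace.single (0 : Fin 2) (1 : ℝ) := by
        ext j
        simp only [PiLp.smul_apply, EuclideanSpace.single_apply, smul_eq_mul]
        split <;> simp
      rw [hss, _root_.map_smul, b.repr_symm_single, hb, smul_smul, mul_inv_cancel₀ hdne, one_smul]
    have h1 : ‖b.repr x‖ = ‖x‖ := b.repr.norm_map x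
    have hsd2 : b.repr v = EuclideanSpace.single (0 : Fin 2) d := by
      rw [← hsd, LinearIsometryEquiv.apply_symm_apply]
    have h2 : ‖b.repr x - EuclideanSpace.single (0 : Fin 2) d‖ = ‖x - v‖ := by
      rw [← hsd2, ← LinearIsometryEquiv.map_sub, b.repr.norm_map]
    simp only [Set.mem_preimage, Set.mem_inter_iff, Metric.mem_closedBall, dist_eq_norm,
      sub_zero, h1, h2]
  -- Step 3 : pass to ℝ × ℝ
  have step3 : volume (Metric.closedBall (0 : EuclideanSpace ℝ (Fin 2)) r₁ ∩ Metric.closedBall (EuclideanSpace.single 0 d) r₂)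
      = volume {p : ℝ × ℝ | p.1 ^ 2 + p.2 ^ 2 ≤ r₁ ^ 2 ∧ (p.1 - d) ^ 2 + p.2 ^ 2 ≤ r₂ ^ 2} := by
    have hmp : MeasurePreserving
        (⇑(MeasurableEquiv.piFinTwo fun _ : Fin 2 => ℝ) ∘ ⇑(MeasurableEquiv.toLp 2 (Fin 2 → ℝ)).symm)
        volume volume :=
      (volume_preserving_piFinTwo _).comp (EuclideanSpace.volume_preserving_symm_measurableEquiv_toLp _)
    have hmeasT : MeasurableSet
        {p : ℝ × ℝ | p.1 ^ 2 + p.2 ^ 2 ≤ r₁ ^ 2 ∧ (p.1 - d) ^ 2 + p.2 ^ 2 ≤ r₂ ^ 2} := by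
      apply MeasurableSet.inter
      · exact measurableSet_le ((continuous_fst.pow 2).add (continuous_snd.pow 2)).measurable
          measurable_const
      · exact measurableSet_le (((continuous_fst.sub continuous_const).pow 2).add
          (continuous_snd.pow 2)).measurable measurable_const
    rw [← hmp.measure_preimage hmeasT.nullMeasurableSet]
    congr 1
    ext x
    have happ : ∀ i : Fin 2, (MeasurableEquiv.toLp 2 (Fin 2 → ℝ)).symm x i = x i := fun i => rfl
    have hnorm1 : ‖x‖ ≤ r₁ ↔ (x 0) ^ 2 + (x 1) ^ 2 ≤ r₁ ^ 2 := by
      rw [EuclideanSpace.norm_eq, Real.sqrt_le_left hr₁.le]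
      simp [Fin.sum_univ_two, sq_abs]
    have hnorm2 : ‖x - EuclideanSpace.single (0 : Fin 2) d‖ ≤ r₂ ↔
        (x 0 - d) ^ 2 + (x 1) ^ 2 ≤ r₂ ^ 2 := by
      rw [EuclideanSpace.norm_eq, Real.sqrt_le_left hr₂.le]
      simp [Fin.sum_univ_two, sq_abs, EuclideanSpace.single_apply]
    simp only [Set.mem_preimage, Set.mem_inter_iff, Set.mem_setOf_eq, Metric.mem_closedBall,
      dist_eq_norm, sub_zero, MeasurableEquiv.piFinTwo_apply, Function.comp_apply, happ]
    rw [hnorm1, hnorm2]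
  rw [step1, step2, step3]
  exact area_T hr₁ hr₂ hlow hhigh
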